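/- arXiv:2211.09106 — 2 statements merged into one kernel-verified Lean document; each statement's English description precedes it below -/
import Mathlib

section
/- Let G = (U, V, E) be a bipartite graph with |U| = |V| = n, edges colored red or blue, that has a perfect matching with an even number of red edges but no perfect matching with an odd number of red edges. Then the linear program {x ≥ 0 : Σ_{e∈δ(w)} x_e = 1 for all vertices w, and Σ_{e∈E_L} x_e ≥ 1 for all labelings L with |L⁻¹(1)| ≡ n (mod 2)} is infeasible. -/
/-- An edge of the colored bipartite multigraph: left endpoint, right endpoint,
color (`true` = red, `false` = blue). -/
abbrev ColEdge (n : ℕ) := Fin n × Fin n × Bool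

/-- `M` is a perfect matching of the graph with edge set `E`. -/
def IsPM {n : ℕ} (E M : Finset (ColEdge n)) : Prop :=
  M ⊆ E ∧
  (∀ u : Fin n, (M.filter (fun e => e.1 = u)).card = 1) ∧
  (∀ v : Fin n, (M.filter (fun e => e.2.1 = v)).card = 1)

/-- The edge `e` violates the labeling `(LU, LV)`: blue with equal labels, or
red with different labels. -/
def Violates {n : ℕ} (LU LV : Fin n → Bool) (e : ColEdge n) : Prop :=
  (e.2.2 = false ∧ LU e.1 = LV e.2.1) ∨ (e.2.2 = true ∧ LU e.1 ≠ LV e.2.1)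

instance {n : ℕ} (LU LV : Fin n → Bool) : DecidablePred (Violates LU LV) :=
  fun e => by unfold Violates; infer_instance

namespace EM

variable {n : ℕ}

def Allowed (E : Finset (ColEdge n)) (e : ColEdge n) : Prop :=
  ∃ M, IsPM E M ∧ e ∈ M

lemma Allowed.memE {E : Finset (ColEdge n)} {e : ColEdge n} (h : Allowed E e) : e ∈ E := by
  obtain ⟨M, hM, he⟩ := h; exact hM.1 he

/-- Red count as an element of ZMod 2. -/
def RedZ (M : Finset (ColEdge n)) : ZMod 2 := ∑ e ∈ M, (if e.2.2 then 1 else 0)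

lemma redZ_eq (M : Finset (ColEdge n)) :
    RedZ M = ((M.filter (fun e => e.2.2 = true)).card : ZMod 2) := by
  rw [RedZ, Finset.sum_boole]

lemma redZ_zero_of_even {M : Finset (ColEdge n)}
    (h : Even (M.filter (fun e => e.2.2 = true)).card) : RedZ M = 0 := by
  rw [redZ_eq]
  obtain ⟨k, hk⟩ := h
  rw [hk]
  push_cast
  ring_nf
  rw [show ((2:ZMod 2) = 0) from rfl]
  ring

/-- From a function picking one edge per left vertex, we get a perfect matching. -/
lemma pm_of_fun {E : Finset (ColEdge n)} (g : Fin n → ColEdge n)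
    (h1 : ∀ u, (g u).1 = u) (h2 : Function.Injective (fun u => (g u).2.1))
    (hE : ∀ u, g u ∈ E) : IsPM E (Finset.image g Finset.univ) := by
  have hginj : Function.Injective g := by
    intro a b hab
    rw [← h1 a, ← h1 b, hab]
  have h2' : Function.Bijective (fun u => (g u).2.1) :=
    (Finite.injective_iff_bijective).1 h2
  refine ⟨?_, ?_, ?_⟩
  · intro e he
    obtain ⟨u, _, rfl⟩ := Finset.mem_image.1 he
    exact hE u
  · intro u
    have : (Finset.image g Finset.univ).filter (fun e => e.1 = u) = {g u} := by
      ext e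
      simp only [Finset.mem_filter, Finset.mem_image, Finset.mem_singleton]
      constructor
      · rintro ⟨⟨w, _, rfl⟩, h⟩
        rw [h1 w] at h; rw [h]
      · rintro rfl
        exact ⟨⟨u, Finset.mem_univ u, rfl⟩, h1 u⟩
    rw [this, Finset.card_singleton]
  · intro v
    obtain ⟨u, hu⟩ := h2'.2 v
    have : (Finset.image g Finset.univ).filter (fun e => e.2.1 = v) = {g u} := by
      ext e
      simp only [Finset.mem_filter, Finset.mem_image, Finset.mem_singleton]
      constructor
      · rintro ⟨⟨w, _, rfl⟩, h⟩
        have : w = u := h2 (by simpa [hu] using h)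
        rw [this]
      · rintro rfl
        exact ⟨⟨u, Finset.mem_univ u, rfl⟩, hu⟩
    rw [this, Finset.card_singleton]


def wt (ρ : Fin n → Fin n) (cm : Fin n → Bool) (e : ColEdge n) : ZMod 2 :=
  (if e.2.2 then 1 else 0) + (if cm (ρ e.2.1) then 1 else 0)

def Chain (E : Finset (ColEdge n)) (ρ : Fin n → Fin n) :
    Fin n → List (ColEdge n) → Fin n → Prop
  | u, [], u' => u = u'
  | u, e :: t, u' => Allowed E e ∧ e.1 = u ∧ Chain E ρ (ρ e.2.1) t u'

def wts (ρ : Fin n → Fin n) (cm : Fin n → Bool) (l : List (ColEdge n)) : ZMod 2 :=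
  (l.map (wt ρ cm)).sum

variable {E : Finset (ColEdge n)} {ρ : Fin n → Fin n} {cm : Fin n → Bool}

@[simp] lemma chain_nil {u u' : Fin n} : Chain E ρ u [] u' ↔ u = u' := Iff.rfl

@[simp] lemma chain_cons {u u' : Fin n} {e : ColEdge n} {t : List (ColEdge n)} :
    Chain E ρ u (e :: t) u' ↔ Allowed E e ∧ e.1 = u ∧ Chain E ρ (ρ e.2.1) t u' := Iff.rfl

lemma chain_append {l₁ l₂ : List (ColEdge n)} {u u' : Fin n} :
    Chain E ρ u (l₁ ++ l₂) u' ↔ ∃ w, Chain E ρ u l₁ w ∧ Chain E ρ w l₂ u' := by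
  induction l₁ generalizing u with
  | nil => simp
  | cons e t ih =>
    simp only [List.cons_append, chain_cons, ih]
    constructor
    · rintro ⟨hA, h1, w, hw1, hw2⟩; exact ⟨w, ⟨hA, h1, hw1⟩, hw2⟩
    · rintro ⟨w, ⟨hA, h1, hw1⟩, hw2⟩; exact ⟨hA, h1, w, hw1, hw2⟩

lemma chain_mem {l : List (ColEdge n)} {u u' : Fin n} (h : Chain E ρ u l u') :
    ∀ e ∈ l, Allowed E e := by
  induction l generalizing u with
  | nil => intro e he; simp at he
  | cons f t ih =>
    intro e he
    rcases List.mem_cons.1 he with rfl | he'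
    · exact h.1
    · exact ih h.2.2 e he'

@[simp] lemma wts_nil : wts ρ cm ([] : List (ColEdge n)) = 0 := rfl

@[simp] lemma wts_cons (e : ColEdge n) (l : List (ColEdge n)) :
    wts ρ cm (e :: l) = wt ρ cm e + wts ρ cm l := by simp [wts]

lemma wts_append (l₁ l₂ : List (ColEdge n)) :
    wts ρ cm (l₁ ++ l₂) = wts ρ cm l₁ + wts ρ cm l₂ := by simp [wts]

/-- the rights of a chain are `μ` of the shifted lefts, where `μ (ρ v) = v`. -/
lemma chain_rights {μ : Fin n → Fin n} (hμρ : ∀ v, μ (ρ v) = v) :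
    ∀ (l : List (ColEdge n)) (u u' : Fin n), l ≠ [] → Chain E ρ u l u' →
      l.map (fun e => e.2.1) = (((l.map (fun e => e.1)).tail) ++ [u']).map μ := by
  intro l
  induction l with
  | nil => intro u u' h; exact absurd rfl h
  | cons e t ih =>
    intro u u' _ hch
    rcases hch with ⟨hA, h1, hch'⟩
    cases t with
    | nil =>
      rcases hch' with rfl
      simp [hμρ]
    | cons f t' =>
      have hf1 : f.1 = ρ e.2.1 := hch'.2.1
      have := ih (ρ e.2.1) u' (by simp) hch'
      simp only [List.map_cons, List.tail_cons] at this ⊢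
      rw [this]
      simp [hf1, hμρ]


lemma wts_eq (l : List (ColEdge n)) :
    wts ρ cm l = (l.map fun e => if e.2.2 then (1:ZMod 2) else 0).sum +
      (l.map fun e => if cm (ρ e.2.1) then (1:ZMod 2) else 0).sum := by
  induction l with
  | nil => simp [wts]
  | cons e t ih => simp [wts, wt] at ih ⊢; rw [ih]; ring

lemma cycle_wts {m : Fin n → ColEdge n} {μ : Fin n → Fin n}
    (hall : ∀ M, IsPM E M → RedZ M = 0)
    (hm1 : ∀ u, (m u).1 = u) (hmμ : ∀ u, (m u).2.1 = μ u) (hmc : ∀ u, (m u).2.2 = cm u)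
    (hmE : ∀ u, m u ∈ E)
    (hρμ : ∀ u, ρ (μ u) = u) (hμρ : ∀ v, μ (ρ v) = v)
    (hcm0 : ∑ u : Fin n, (if cm u then (1 : ZMod 2) else 0) = 0)
    (es : List (ColEdge n)) (hne : es ≠ []) (u : Fin n)
    (hch : Chain E ρ u es u) (hnd : (es.map (fun e => e.1)).Nodup) :
    wts ρ cm es = 0 := by
  classical
  set L : List (Fin n) := es.map (fun e => e.1) with hL
  have hμinj : Function.Injective μ := by
    intro a b h
    rw [← hρμ a, ← hρμ b, h]
  -- the selection function
  set g : Fin n → ColEdge n := fun w =>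
    if h : (es.filter (fun e => e.1 = w)) ≠ [] then (es.filter (fun e => e.1 = w)).head h
    else m w with hg
  have hinj_left : ∀ x ∈ es, ∀ y ∈ es, x.1 = y.1 → x = y := by
    intro x hx y hy hxy
    exact List.inj_on_of_nodup_map hnd hx hy hxy
  have f2 : ∀ e ∈ es, g e.1 = e := by
    intro e he
    have hmemf : e ∈ es.filter (fun e' => e'.1 = e.1) := by
      simp [List.mem_filter, he]
    have hne' : es.filter (fun e' => e'.1 = e.1) ≠ [] := List.ne_nil_of_mem hmemf
    have hh := List.head_mem hne'
    rw [List.mem_filter] at hh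
    simp only [hg]
    rw [dif_pos hne']
    exact hinj_left _ hh.1 _ he (by simpa using hh.2)
  have f1 : ∀ w, (g w).1 = w := by
    intro w
    simp only [hg]
    split
    · next h =>
      have hh := List.head_mem h
      rw [List.mem_filter] at hh
      simpa using hh.2
    · exact hm1 w
  have hgL : ∀ w, w ∉ L → g w = m w := by
    intro w hw
    simp only [hg]
    split
    · next h =>
      exfalso
      have hh := List.head_mem h
      rw [List.mem_filter] at hh
      exact hw (List.mem_map.2 ⟨_, hh.1, by simpa using hh.2⟩)
    · rfl
  have hgmem : ∀ w ∈ L, g w ∈ es := by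
    intro w hw
    obtain ⟨e, he, rfl⟩ := List.mem_map.1 hw
    rw [f2 e he]; exact he
  -- rights
  obtain ⟨e0, t, rfl⟩ := List.exists_cons_of_ne_nil hne
  have hu : e0.1 = u := hch.2.1
  have hR : (e0 :: t).map (fun e => e.2.1) = ((t.map (fun e => e.1)) ++ [u]).map μ := by
    have := chain_rights (E := E) hμρ (e0 :: t) u u (by simp) hch
    simpa using this
  have hperm : ((e0 :: t).map (fun e => e.2.1)).Perm (L.map μ) := by
    rw [hR, hL]
    have : ((t.map (fun e => e.1)) ++ [u]).Perm ((e0 :: t).map (fun e => e.1)) := by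
      simpa [hu] using List.perm_append_singleton u (t.map (fun e => e.1))
    exact this.map μ
  have hRnd : ((e0 :: t).map (fun e => e.2.1)).Nodup :=
    hperm.nodup_iff.2 (hnd.map hμinj)
  have hrinj : Function.Injective (fun w => (g w).2.1) := by
    intro a b hab
    simp only at hab
    have hmem_im : ∀ w ∈ L, ∃ w' ∈ L, (g w).2.1 = μ w' := by
      intro w hw
      have : (g w).2.1 ∈ (e0 :: t).map (fun e => e.2.1) :=
        List.mem_map.2 ⟨g w, hgmem w hw, rfl⟩
      have := hperm.mem_iff.1 this
      obtain ⟨w', hw', h⟩ := List.mem_map.1 this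
      exact ⟨w', hw', h.symm⟩
    by_cases ha : a ∈ L <;> by_cases hb : b ∈ L
    · have h1 : g a = g b := by
        apply List.inj_on_of_nodup_map hRnd (hgmem a ha) (hgmem b hb) hab
      rw [← f1 a, ← f1 b, h1]
    · exfalso
      obtain ⟨w', hw', h⟩ := hmem_im a ha
      rw [hab, hgL b hb, hmμ] at h
      exact hb (hμinj h.symm ▸ hw')
    · exfalso
      obtain ⟨w', hw', h⟩ := hmem_im b hb
      rw [← hab, hgL a ha, hmμ] at h
      exact ha (hμinj h.symm ▸ hw')
    · rw [hgL a ha, hgL b hb, hmμ, hmμ] at hab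
      exact hμinj hab
  have hgE : ∀ w, g w ∈ E := by
    intro w
    by_cases hw : w ∈ L
    · exact (chain_mem hch _ (hgmem w hw)).memE
    · rw [hgL w hw]; exact hmE w
  have hPM : IsPM E (Finset.image g Finset.univ) := pm_of_fun g f1 hrinj hgE
  have hginj : Function.Injective g := fun a b h => by rw [← f1 a, ← f1 b, h]
  -- red computation
  have hRZ : RedZ (Finset.image g Finset.univ)
      = ∑ w : Fin n, (if (g w).2.2 then (1:ZMod 2) else 0) := by
    rw [RedZ, Finset.sum_image (fun x _ y _ h => hginj h)]
  have hsplit : ∑ w : Fin n, (if (g w).2.2 then (1:ZMod 2) else 0)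
      = ∑ w ∈ Finset.univ.filter (fun w => w ∈ L), (if (g w).2.2 then (1:ZMod 2) else 0)
        + ∑ w ∈ Finset.univ.filter (fun w => w ∉ L), (if (g w).2.2 then (1:ZMod 2) else 0) :=
    (Finset.sum_filter_add_sum_filter_not _ _ _).symm
  have hA : Finset.univ.filter (fun w => w ∈ L) = L.toFinset := by
    ext w; simp
  have hin_sum : ∑ w ∈ Finset.univ.filter (fun w => w ∈ L), (if (g w).2.2 then (1:ZMod 2) else 0)
      = ((e0 :: t).map (fun e => if e.2.2 then (1:ZMod 2) else 0)).sum := by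
    rw [hA, List.sum_toFinset _ hnd]
    rw [hL, List.map_map]
    congr 1
    apply List.map_congr_left
    intro e he
    simp only [Function.comp_apply]
    rw [f2 e he]
  have hout_sum : ∑ w ∈ Finset.univ.filter (fun w => w ∉ L), (if (g w).2.2 then (1:ZMod 2) else 0)
      = ∑ w ∈ Finset.univ.filter (fun w => w ∉ L), (if cm w then (1:ZMod 2) else 0) := by
    apply Finset.sum_congr rfl
    intro w hw
    rw [Finset.mem_filter] at hw
    rw [hgL w hw.2, hmc]
  -- the cm-sum flip
  have hcmsplit : ∑ w ∈ Finset.univ.filter (fun w => w ∈ L), (if cm w then (1:ZMod 2) else 0)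
        + ∑ w ∈ Finset.univ.filter (fun w => w ∉ L), (if cm w then (1:ZMod 2) else 0) = 0 := by
    rw [Finset.sum_filter_add_sum_filter_not]; exact hcm0
  -- weight sum
  have hwts : wts ρ cm (e0 :: t) = ((e0 :: t).map (fun e => if e.2.2 then (1:ZMod 2) else 0)).sum
      + ∑ w ∈ Finset.univ.filter (fun w => w ∈ L), (if cm w then (1:ZMod 2) else 0) := by
    rw [wts_eq]
    congr 1
    have h1 : ((e0 :: t).map (fun e => if cm (ρ e.2.1) then (1:ZMod 2) else 0))
        = ((e0 :: t).map (fun e => e.2.1)).map (fun v => if cm (ρ v) then (1:ZMod 2) else 0) := by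
      rw [List.map_map]
      rfl
    rw [h1]
    have h2 := (hperm.map (fun v => if cm (ρ v) then (1:ZMod 2) else 0)).sum_eq
    rw [h2, List.map_map]
    have h3 : (L.map ((fun v => if cm (ρ v) then (1:ZMod 2) else 0) ∘ μ))
        = L.map (fun w => if cm w then (1:ZMod 2) else 0) := by
      apply List.map_congr_left
      intro w _
      simp [hρμ]
    rw [h3, hA, List.sum_toFinset _ hnd]
  have hzero := hall _ hPM
  rw [hRZ, hsplit, hin_sum, hout_sum] at hzero
  have flip : ∀ p q r : ZMod 2, p + q = 0 → r + q = 0 → r + p = 0 := by decide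
  rw [hwts]
  exact flip _ _ _ hcmsplit hzero


lemma exists_dup_split {α β : Type*} (f : α → β) :
    ∀ l : List α, ¬ (l.map f).Nodup →
      ∃ l₁ a l₂ b l₃, l = l₁ ++ a :: (l₂ ++ b :: l₃) ∧ f a = f b := by
  intro l
  induction l with
  | nil => intro h; simp at h
  | cons a t ih =>
    intro h
    by_cases hmem : f a ∈ t.map f
    · obtain ⟨b, hb, hfb⟩ := List.mem_map.1 hmem
      obtain ⟨s, t', rfl⟩ := List.append_of_mem hb
      exact ⟨[], a, s, b, t', by simp, hfb.symm⟩
    · have hnd : ¬ (t.map f).Nodup := by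
        intro hh
        exact h (by rw [List.map_cons, List.nodup_cons]; exact ⟨hmem, hh⟩)
      obtain ⟨l₁, x, l₂, y, l₃, rfl, hxy⟩ := ih hnd
      exact ⟨a :: l₁, x, l₂, y, l₃, by simp, hxy⟩

/-- bundle of data derived from the even perfect matching `M₀`. -/
structure Ctx (n : ℕ) where
  E : Finset (ColEdge n)
  m : Fin n → ColEdge n
  μ : Fin n → Fin n
  ρ : Fin n → Fin n
  cm : Fin n → Bool
  hall : ∀ M, IsPM E M → RedZ M = 0
  hm1 : ∀ u, (m u).1 = u
  hmμ : ∀ u, (m u).2.1 = μ u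
  hmc : ∀ u, (m u).2.2 = cm u
  hmE : ∀ u, m u ∈ E
  hρμ : ∀ u, ρ (μ u) = u
  hμρ : ∀ v, μ (ρ v) = v
  hcm0 : ∑ u : Fin n, (if cm u then (1 : ZMod 2) else 0) = 0

variable (C : Ctx n)

lemma closed_wts : ∀ (k : ℕ) (es : List (ColEdge n)) (u : Fin n),
    es.length ≤ k → Chain C.E C.ρ u es u → wts C.ρ C.cm es = 0 := by
  intro k
  induction k with
  | zero =>
    intro es u hlen hch
    have : es = [] := List.length_eq_zero_iff.1 (Nat.le_zero.1 hlen)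
    subst this; simp
  | succ k ih =>
    intro es u hlen hch
    by_cases hnd : (es.map (fun e => e.1)).Nodup
    · rcases eq_or_ne es [] with rfl | hne
      · simp
      · exact cycle_wts C.hall C.hm1 C.hmμ C.hmc C.hmE C.hρμ C.hμρ C.hcm0 es hne u hch hnd
    · obtain ⟨l₁, a, l₂, b, l₃, rfl, hab⟩ := exists_dup_split _ es hnd
      rw [chain_append] at hch
      obtain ⟨w₁, hc1, hc2⟩ := hch
      obtain ⟨hAa, ha1, hc3⟩ := hc2
      rw [chain_append] at hc3
      obtain ⟨w₂, hc4, hc5⟩ := hc3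
      have hb1 : b.1 = w₂ := hc5.2.1
      have hw : w₂ = w₁ := by rw [← hb1, ← hab, ha1]
      have hmid : Chain C.E C.ρ w₁ (a :: l₂) w₁ := ⟨hAa, ha1, hw ▸ hc4⟩
      have houter : Chain C.E C.ρ u (l₁ ++ b :: l₃) u :=
        chain_append.2 ⟨w₁, hc1, ⟨hc5.1, by rw [hb1, hw], hc5.2.2⟩⟩
      have hl1 : (a :: l₂).length ≤ k := by simp at hlen ⊢; omega
      have hl2 : (l₁ ++ b :: l₃).length ≤ k := by simp at hlen ⊢; omega
      have h1 := ih _ _ hl1 hmid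
      have h2 := ih _ _ hl2 houter
      rw [wts_append, wts_cons, wts_append, wts_cons] at *
      linear_combination h1 + h2

lemma rev_step (e : ColEdge n) (hA : Allowed C.E e) :
    ∃ l, Chain C.E C.ρ (C.ρ e.2.1) l e.1 := by
  classical
  obtain ⟨N, hN, heN⟩ := hA
  have hpick : ∀ w, ∃ a, N.filter (fun e' => e'.1 = w) = {a} :=
    fun w => Finset.card_eq_one.1 (hN.2.1 w)
  choose nm hnm using hpick
  have hnmf : ∀ w, nm w ∈ N ∧ (nm w).1 = w := by
    intro w
    have : nm w ∈ N.filter (fun e' => e'.1 = w) := by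
      rw [hnm w]; exact Finset.mem_singleton_self _
    have := Finset.mem_filter.1 this
    exact ⟨this.1, by simpa using this.2⟩
  have huniq : ∀ w x, x ∈ N → x.1 = w → x = nm w := by
    intro w x hx h1
    have : x ∈ N.filter (fun e' => e'.1 = w) := Finset.mem_filter.2 ⟨hx, by simpa using h1⟩
    rw [hnm w] at this
    exact Finset.mem_singleton.1 this
  set τ : Fin n → Fin n := fun w => C.ρ ((nm w).2.1) with hτ
  have hstep : ∀ w, Chain C.E C.ρ w [nm w] (τ w) :=
    fun w => ⟨⟨N, hN, (hnmf w).1⟩, (hnmf w).2, rfl⟩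
  have hrinj : ∀ w w', (nm w).2.1 = (nm w').2.1 → w = w' := by
    intro w w' h
    have hcard := C.hall  -- dummy
    have h1 : nm w ∈ N.filter (fun e' => e'.2.1 = (nm w).2.1) :=
      Finset.mem_filter.2 ⟨(hnmf w).1, by simp⟩
    have h2 : nm w' ∈ N.filter (fun e' => e'.2.1 = (nm w).2.1) :=
      Finset.mem_filter.2 ⟨(hnmf w').1, by simp [h]⟩
    have := Finset.card_le_one.1 (le_of_eq (hN.2.2 ((nm w).2.1))) _ h1 _ h2
    rw [← (hnmf w).2, ← (hnmf w').2, this]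
  have hτinj : Function.Injective τ := by
    intro a b h
    apply hrinj a b
    have := congrArg C.μ h
    simpa [hτ, C.hμρ] using this
  have hiter : ∀ (k : ℕ) (w : Fin n), ∃ l, Chain C.E C.ρ w l (τ^[k] w) := by
    intro k
    induction k with
    | zero => exact fun w => ⟨[], rfl⟩
    | succ k ih =>
      intro w
      obtain ⟨l, hl⟩ := ih w
      refine ⟨l ++ [nm (τ^[k] w)], chain_append.2 ⟨τ^[k] w, hl, ?_⟩⟩
      have := hstep (τ^[k] w)
      rwa [← Function.iterate_succ_apply' τ k w] at this
  have hnme : nm e.1 = e := (huniq e.1 e heN rfl).symm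
  have hτe : τ e.1 = C.ρ e.2.1 := by rw [hτ]; simp only []; rw [hnme]
  obtain ⟨i, j, hij, hEq⟩ := Finite.exists_ne_map_eq_of_infinite (fun i : ℕ => τ^[i] e.1)
  have key : ∀ i j : ℕ, i < j → τ^[i] e.1 = τ^[j] e.1 →
      ∃ l, Chain C.E C.ρ (C.ρ e.2.1) l e.1 := by
    intro i j hlt heq
    have h1 : τ^[i] (τ^[j-i] e.1) = τ^[i] e.1 := by
      rw [← Function.iterate_add_apply, show i + (j - i) = j from by omega]
      exact heq.symm
    have h2 : τ^[j-i] e.1 = e.1 := hτinj.iterate i h1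
    obtain ⟨l, hl⟩ := hiter (j - i - 1) (τ e.1)
    refine ⟨l, ?_⟩
    have h3 : τ^[j-i-1] (τ e.1) = e.1 := by
      have h4 := (Function.iterate_succ_apply τ (j-i-1) e.1).symm
      rw [show (j - i - 1).succ = j - i from by omega] at h4
      rw [h4]
      exact h2
    rw [← hτe]
    rwa [h3] at hl
  rcases lt_or_gt_of_ne hij with h | h
  · exact key i j h hEq
  · exact key j i h hEq.symm

def Reach (u v : Fin n) : Prop := ∃ l, Chain C.E C.ρ u l v

lemma reach_refl (u : Fin n) : Reach C u u := ⟨[], rfl⟩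

lemma reach_trans {u v w : Fin n} (h1 : Reach C u v) (h2 : Reach C v w) : Reach C u w := by
  obtain ⟨l₁, hl₁⟩ := h1
  obtain ⟨l₂, hl₂⟩ := h2
  exact ⟨l₁ ++ l₂, chain_append.2 ⟨v, hl₁, hl₂⟩⟩

lemma chain_symm : ∀ (l : List (ColEdge n)) (u v : Fin n),
    Chain C.E C.ρ u l v → Reach C v u := by
  intro l
  induction l with
  | nil =>
    intro u v h
    rw [show u = v from h]
    exact reach_refl C v
  | cons e t ih =>
    intro u v h
    obtain ⟨hA, h1, hch⟩ := h
    have hback : Reach C v (C.ρ e.2.1) := ih _ _ hch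
    obtain ⟨l', hl'⟩ := rev_step C e hA
    rw [← h1]
    exact reach_trans C hback ⟨l', hl'⟩

lemma reach_symm {u v : Fin n} (h : Reach C u v) : Reach C v u := by
  obtain ⟨l, hl⟩ := h
  exact chain_symm C l u v hl

lemma chain_wts_unique {u v : Fin n} {l₁ l₂ : List (ColEdge n)}
    (h1 : Chain C.E C.ρ u l₁ v) (h2 : Chain C.E C.ρ u l₂ v) :
    wts C.ρ C.cm l₁ = wts C.ρ C.cm l₂ := by
  obtain ⟨l₃, h3⟩ := reach_symm C ⟨l₂, h2⟩
  have c1 := closed_wts C (l₁ ++ l₃).length (l₁ ++ l₃) u le_rfl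
    (chain_append.2 ⟨v, h1, h3⟩)
  have c2 := closed_wts C (l₂ ++ l₃).length (l₂ ++ l₃) u le_rfl
    (chain_append.2 ⟨v, h2, h3⟩)
  rw [wts_append] at c1 c2
  have := c1.trans c2.symm
  exact add_right_cancel this

noncomputable def comp (u : Fin n) : Finset (Fin n) :=
  letI := Classical.decPred (Reach C u)
  Finset.univ.filter (fun w => Reach C u w)

lemma mem_comp {u w : Fin n} : w ∈ comp C u ↔ Reach C u w := by
  rw [comp]
  rw [@Finset.mem_filter _ _ (Classical.decPred (Reach C u))]
  simp

lemma comp_nonempty (u : Fin n) : (comp C u).Nonempty :=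
  ⟨u, (mem_comp C).2 (reach_refl C u)⟩

noncomputable def root (u : Fin n) : Fin n := (comp C u).min' (comp_nonempty C u)

lemma reach_root (u : Fin n) : Reach C u (root C u) :=
  (mem_comp C).1 (Finset.min'_mem (comp C u) (comp_nonempty C u))

lemma root_eq {u v : Fin n} (h : Reach C u v) : root C u = root C v := by
  have hcomp : comp C u = comp C v := by
    ext w
    rw [mem_comp, mem_comp]
    constructor
    · intro h2
      exact reach_trans C (reach_symm C h) h2
    · intro h2
      exact reach_trans C h h2
  have haux : ∀ (s t : Finset (Fin n)) (hs : s.Nonempty) (ht : t.Nonempty),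
      s = t → s.min' hs = t.min' ht := by
    rintro s t hs ht rfl
    rfl
  exact haux _ _ _ _ hcomp

lemma root_path (u : Fin n) : ∃ l, Chain C.E C.ρ (root C u) l u :=
  reach_symm C (reach_root C u)

noncomputable def pot (u : Fin n) : ZMod 2 :=
  wts C.ρ C.cm (Classical.choose (root_path C u))

lemma pot_chain (u : Fin n) : Chain C.E C.ρ (root C u) (Classical.choose (root_path C u)) u :=
  Classical.choose_spec (root_path C u)

lemma pot_step (e : ColEdge n) (hA : Allowed C.E e) :
    pot C (C.ρ e.2.1) = pot C e.1 + wt C.ρ C.cm e := by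
  have hre : Reach C e.1 (C.ρ e.2.1) := ⟨[e], ⟨hA, rfl, rfl⟩⟩
  have hroot : root C e.1 = root C (C.ρ e.2.1) := root_eq C hre
  have hchain2 : Chain C.E C.ρ (root C (C.ρ e.2.1))
      ((Classical.choose (root_path C e.1)) ++ [e]) (C.ρ e.2.1) := by
    rw [← hroot]
    exact chain_append.2 ⟨e.1, pot_chain C e.1, ⟨hA, rfl, rfl⟩⟩
  have := chain_wts_unique C (pot_chain C (C.ρ e.2.1)) hchain2
  rw [pot, pot, this, wts_append, wts_cons, wts_nil, add_zero]


lemma allowed_of_support {E : Finset (ColEdge n)} (x : ColEdge n → ℝ)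
    (hx0 : ∀ e ∈ E, 0 ≤ x e)
    (hrow : ∀ u : Fin n, ∑ e ∈ E.filter (fun e => e.1 = u), x e = 1)
    (hcol : ∀ v : Fin n, ∑ e ∈ E.filter (fun e => e.2.1 = v), x e = 1)
    {e₀ : ColEdge n} (he₀E : e₀ ∈ E) (he₀x : x e₀ ≠ 0) : Allowed E e₀ := by
  classical
  obtain ⟨u₀, v₀, c₀⟩ := e₀
  have hx₀pos : 0 < x (u₀, v₀, c₀) := lt_of_le_of_ne (hx0 _ he₀E) (Ne.symm he₀x)
  set NS : Fin n → Finset (Fin n) := fun u =>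
    Finset.univ.filter (fun v => ∃ c, (u, v, c) ∈ E ∧ x (u, v, c) ≠ 0) with hNS
  -- key deficiency claim
  have key : ∀ A : Finset (Fin n), u₀ ∉ A → A.card ≤ ((A.biUnion NS).erase v₀).card := by
    intro A hu₀A
    set F := E.filter (fun e => e.1 ∈ A) with hF
    set N := A.biUnion NS with hN
    set g : Fin n → ℝ := fun v => ∑ e ∈ F.filter (fun e => e.2.1 = v), x e with hgdef
    have hsum1 : ∑ e ∈ F, x e = (A.card : ℝ) := by
      have hbi : F = A.biUnion (fun u => E.filter (fun e => e.1 = u)) := by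
        ext e
        simp only [hF, Finset.mem_filter, Finset.mem_biUnion]
        constructor
        · rintro ⟨he, hA⟩; exact ⟨e.1, hA, he, rfl⟩
        · rintro ⟨u, hu, he, h1⟩; exact ⟨he, h1 ▸ hu⟩
      have hdisj : (↑A : Set (Fin n)).PairwiseDisjoint
          (fun u => E.filter (fun e => e.1 = u)) := by
        intro a _ b _ hab
        apply Finset.disjoint_left.2
        intro e he1 he2
        rw [Finset.mem_filter] at he1 he2
        exact hab (he1.2 ▸ he2.2)
      rw [hbi, Finset.sum_biUnion hdisj, Finset.sum_congr rfl (fun u _ => hrow u),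
        Finset.sum_const, nsmul_eq_mul, mul_one]
    have hfib : ∑ v : Fin n, g v = (A.card : ℝ) := by
      rw [hgdef]
      rw [Finset.sum_fiberwise F (fun e => e.2.1) x]
      exact hsum1
    have hg_le : ∀ v, g v ≤ 1 := by
      intro v
      rw [← hcol v, hgdef]
      apply Finset.sum_le_sum_of_subset_of_nonneg
      · intro e he
        rw [Finset.mem_filter] at he ⊢
        rw [hF, Finset.mem_filter] at he
        exact ⟨he.1.1, he.2⟩
      · intro e he _
        exact hx0 e (Finset.mem_filter.1 he).1
    have hg_zero : ∀ v, v ∉ N → g v = 0 := by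
      intro v hv
      apply Finset.sum_eq_zero
      intro e he
      obtain ⟨ea, ev, ec⟩ := e
      rw [Finset.mem_filter, hF, Finset.mem_filter] at he
      simp only at he
      obtain ⟨⟨heE, heA⟩, hev⟩ := he
      subst hev
      by_contra hxe
      apply hv
      rw [hN, Finset.mem_biUnion]
      refine ⟨ea, heA, ?_⟩
      rw [hNS]
      simp only [Finset.mem_filter, Finset.mem_univ, true_and]
      exact ⟨ec, heE, hxe⟩
    have hgv₀ : g v₀ ≤ 1 - x (u₀, v₀, c₀) := by
      have hmem : (u₀, v₀, c₀) ∈ E.filter (fun e => e.2.1 = v₀) := by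
        rw [Finset.mem_filter]; exact ⟨he₀E, rfl⟩
      have hsub : F.filter (fun e => e.2.1 = v₀) ⊆ (E.filter (fun e => e.2.1 = v₀)).erase (u₀, v₀, c₀) := by
        intro e he
        rw [Finset.mem_filter, hF, Finset.mem_filter] at he
        rw [Finset.mem_erase, Finset.mem_filter]
        refine ⟨?_, he.1.1, he.2⟩
        intro heq
        apply hu₀A
        rw [← show e.1 = u₀ from by rw [heq]]
        exact he.1.2
      calc g v₀ ≤ ∑ e ∈ (E.filter (fun e => e.2.1 = v₀)).erase (u₀, v₀, c₀), x e := by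
            apply Finset.sum_le_sum_of_subset_of_nonneg hsub
            intro e he _
            exact hx0 e (Finset.mem_filter.1 (Finset.mem_erase.1 he).2).1
        _ = 1 - x (u₀, v₀, c₀) := by
            rw [Finset.sum_erase_eq_sub hmem, hcol v₀]
    -- combine
    have hsplit : ∑ v ∈ Finset.univ \ (N.erase v₀), g v + ∑ v ∈ N.erase v₀, g v
        = (A.card : ℝ) := by
      rw [Finset.sum_sdiff (Finset.subset_univ _)]
      exact hfib
    have hbound1 : ∑ v ∈ N.erase v₀, g v ≤ ((N.erase v₀).card : ℝ) := by
      have := Finset.sum_le_card_nsmul (N.erase v₀) g 1 (fun v _ => hg_le v)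
      simpa using this
    have hbound2 : ∑ v ∈ Finset.univ \ (N.erase v₀), g v ≤ 1 - x (u₀, v₀, c₀) := by
      have hv₀mem : v₀ ∈ Finset.univ \ (N.erase v₀) := by
        rw [Finset.mem_sdiff]
        exact ⟨Finset.mem_univ _, Finset.notMem_erase _ _⟩
      rw [← Finset.add_sum_erase _ g hv₀mem]
      have hrest : ∑ v ∈ (Finset.univ \ (N.erase v₀)).erase v₀, g v = 0 := by
        apply Finset.sum_eq_zero
        intro v hv
        have h1 := Finset.ne_of_mem_erase hv
        have h2 := (Finset.mem_sdiff.1 (Finset.mem_of_mem_erase hv)).2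
        apply hg_zero
        intro hvN
        exact h2 (Finset.mem_erase.2 ⟨h1, hvN⟩)
      rw [hrest, add_zero]
      exact hgv₀
    have hfinal : (A.card : ℝ) < ((N.erase v₀).card : ℝ) + 1 := by
      calc (A.card : ℝ) = _ := hsplit.symm
        _ ≤ (1 - x (u₀, v₀, c₀)) + ((N.erase v₀).card : ℝ) := add_le_add hbound2 hbound1
        _ < ((N.erase v₀).card : ℝ) + 1 := by linarith
    have : A.card < (N.erase v₀).card + 1 := by exact_mod_cast hfinal
    omega
  -- Hall system
  set t : Fin n → Finset (Fin n) := fun u => if u = u₀ then {v₀} else (NS u).erase v₀ with ht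
  have herasebi : ∀ B : Finset (Fin n), B.biUnion (fun u => (NS u).erase v₀)
      = (B.biUnion NS).erase v₀ := by
    intro B
    ext v
    simp only [Finset.mem_biUnion, Finset.mem_erase]
    tauto
  have hHall : ∀ A : Finset (Fin n), A.card ≤ (A.biUnion t).card := by
    intro A
    by_cases hu : u₀ ∈ A
    · have hA' : A = insert u₀ (A.erase u₀) := (Finset.insert_erase hu).symm
      rw [hA', Finset.biUnion_insert]
      have ht₀ : t u₀ = {v₀} := by rw [ht]; simp
      have hbU : (A.erase u₀).biUnion t = ((A.erase u₀).biUnion NS).erase v₀ := by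
        rw [← herasebi]
        apply Finset.biUnion_congr rfl
        intro u hu'
        rw [ht]; simp only []
        rw [if_neg (Finset.ne_of_mem_erase hu')]
      rw [ht₀, hbU, ← Finset.insert_eq]
      have h1 := key (A.erase u₀) (Finset.notMem_erase _ _)
      have h2 : (insert u₀ (A.erase u₀)).card = (A.erase u₀).card + 1 :=
        Finset.card_insert_of_notMem (Finset.notMem_erase _ _)
      have h3 : (insert v₀ (((A.erase u₀).biUnion NS).erase v₀)).card
          = (((A.erase u₀).biUnion NS).erase v₀).card + 1 :=
        Finset.card_insert_of_notMem (Finset.notMem_erase _ _)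
      rw [h2, h3]
      omega
    · have hbU : A.biUnion t = (A.biUnion NS).erase v₀ := by
        rw [← herasebi]
        apply Finset.biUnion_congr rfl
        intro u hu'
        rw [ht]; simp only []
        rw [if_neg (show ¬u = u₀ from fun h => hu (by rw [← h]; exact hu'))]
      rw [hbU]
      exact key A hu
  obtain ⟨f, hfinj, hft⟩ := (Finset.all_card_le_biUnion_card_iff_exists_injective t).1 hHall
  have hfu₀ : f u₀ = v₀ := by
    have := hft u₀
    rw [ht] at this; simp only [if_pos rfl] at this
    exact Finset.mem_singleton.1 this
  have hfS : ∀ u, u ≠ u₀ → ∃ c, (u, f u, c) ∈ E ∧ x (u, f u, c) ≠ 0 := by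
    intro u hu
    have := hft u
    rw [ht] at this; simp only [if_neg hu] at this
    have := Finset.mem_of_mem_erase this
    rw [hNS] at this
    simp only [Finset.mem_filter, Finset.mem_univ, true_and] at this
    exact this
  set gg : Fin n → ColEdge n := fun u =>
    if h : u = u₀ then (u₀, v₀, c₀) else (u, f u, Classical.choose (hfS u h)) with hgg
  have hg1 : ∀ u, (gg u).1 = u := by
    intro u
    rw [hgg]; simp only []
    split
    · next h => rw [h]
    · rfl
  have hg2 : ∀ u, (gg u).2.1 = f u := by
    intro u
    rw [hgg]; simp only []
    split
    · next h => rw [h, hfu₀]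
    · rfl
  have hg2' : Function.Injective (fun u => (gg u).2.1) := by
    intro a b hab
    simp only [hg2] at hab
    exact hfinj hab
  have hgE : ∀ u, gg u ∈ E := by
    intro u
    rw [hgg]; simp only []
    split
    · exact he₀E
    · next h => exact (Classical.choose_spec (hfS u h)).1
  refine ⟨Finset.image gg Finset.univ, pm_of_fun gg hg1 hg2' hgE, ?_⟩
  rw [Finset.mem_image]
  exact ⟨u₀, Finset.mem_univ _, by rw [hgg]; simp⟩

end EM

open EM in
/-- If the colored bipartite graph has a perfect matching with an even number of
red edges but none with an odd number of red edges, then the LP relaxation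
(degree equalities, labeling inequalities for all labelings of the right parity,
nonnegativity) is infeasible. -/
theorem stmt13 {n : ℕ} (E : Finset (ColEdge n))
    (heven : ∃ M, IsPM E M ∧ Even (M.filter (fun e => e.2.2 = true)).card)
    (hnoodd : ¬ ∃ M, IsPM E M ∧ Odd (M.filter (fun e => e.2.2 = true)).card) :
    ¬ ∃ x : ColEdge n → ℝ,
        (∀ e ∈ E, 0 ≤ x e) ∧
        (∀ u : Fin n, ∑ e ∈ E.filter (fun e => e.1 = u), x e = 1) ∧
        (∀ v : Fin n, ∑ e ∈ E.filter (fun e => e.2.1 = v), x e = 1) ∧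
        (∀ LU LV : Fin n → Bool,
          ((Finset.univ.filter (fun u => LU u = true)).card +
            (Finset.univ.filter (fun v => LV v = true)).card) % 2 = n % 2 →
          1 ≤ ∑ e ∈ E.filter (fun e => Violates LU LV e), x e) := by
  rintro ⟨x, hx0, hrow, hcol, hlab⟩
  classical
  obtain ⟨M₀, hM₀, hM₀even⟩ := heven
  have hall : ∀ M, IsPM E M → RedZ M = 0 := by
    intro M hM
    apply redZ_zero_of_even
    by_contra h
    exact hnoodd ⟨M, hM, Nat.not_even_iff_odd.1 h⟩
  -- the matching function of M₀
  have hpick : ∀ u, ∃ a, M₀.filter (fun e => e.1 = u) = {a} :=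
    fun u => Finset.card_eq_one.1 (hM₀.2.1 u)
  choose m hm using hpick
  have hmf : ∀ u, m u ∈ M₀ ∧ (m u).1 = u := by
    intro u
    have h1 : m u ∈ M₀.filter (fun e => e.1 = u) := by
      rw [hm u]; exact Finset.mem_singleton_self _
    have h2 := Finset.mem_filter.1 h1
    exact ⟨h2.1, by simpa using h2.2⟩
  have hm1 : ∀ u, (m u).1 = u := fun u => (hmf u).2
  have hmM₀ : ∀ u, m u ∈ M₀ := fun u => (hmf u).1
  have hmuniq : ∀ u x', x' ∈ M₀ → x'.1 = u → x' = m u := by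
    intro u x' hx' h1
    have : x' ∈ M₀.filter (fun e => e.1 = u) := Finset.mem_filter.2 ⟨hx', by simpa using h1⟩
    rw [hm u] at this
    exact Finset.mem_singleton.1 this
  set μ : Fin n → Fin n := fun u => (m u).2.1 with hμdef
  have hμinj : Function.Injective μ := by
    intro a b h
    have h1 : m a ∈ M₀.filter (fun e => e.2.1 = μ a) :=
      Finset.mem_filter.2 ⟨hmM₀ a, rfl⟩
    have h2 : m b ∈ M₀.filter (fun e => e.2.1 = μ a) :=
      Finset.mem_filter.2 ⟨hmM₀ b, h.symm⟩
    have := Finset.card_le_one.1 (le_of_eq (hM₀.2.2 (μ a))) _ h1 _ h2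
    rw [← hm1 a, ← hm1 b, this]
  have hμbij := (Finite.injective_iff_bijective).1 hμinj
  set ρ : Fin n → Fin n := Fintype.bijInv hμbij with hρdef
  have hρμ : ∀ u, ρ (μ u) = u := Fintype.leftInverse_bijInv hμbij
  have hμρ : ∀ v, μ (ρ v) = v := Fintype.rightInverse_bijInv hμbij
  have hρbij : Function.Bijective ρ := Fintype.bijective_bijInv hμbij
  set cm : Fin n → Bool := fun u => (m u).2.2 with hcmdef
  have hM₀img : M₀ = Finset.image m Finset.univ := by
    ext e
    simp only [Finset.mem_image]
    constructor
    · intro he; exact ⟨e.1, Finset.mem_univ _, (hmuniq e.1 e he rfl).symm⟩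
    · rintro ⟨u, _, rfl⟩; exact hmM₀ u
  have hminj : Function.Injective m := fun a b h => by rw [← hm1 a, ← hm1 b, h]
  have hcm0 : ∑ u : Fin n, (if cm u then (1:ZMod 2) else 0) = 0 := by
    have h0 := hall M₀ hM₀
    rw [RedZ, hM₀img, Finset.sum_image (fun a _ b _ h => hminj h)] at h0
    simpa [hcmdef] using h0
  have hmE : ∀ u, m u ∈ E := fun u => hM₀.1 (hmM₀ u)
  set C : Ctx n := ⟨E, m, μ, ρ, cm, hall, hm1, fun u => rfl, fun u => rfl, hmE, hρμ, hμρ, hcm0⟩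
    with hC
  have hCρ : C.ρ = ρ := by rw [hC]
  have hCcm : C.cm = cm := by rw [hC]
  have hCE : C.E = E := by rw [hC]
  -- labels
  set LU : Fin n → Bool := fun u => decide (pot C u = 1) with hLU
  set LV : Fin n → Bool := fun v =>
    decide (pot C (ρ v) + (if cm (ρ v) then (1:ZMod 2) else 0) + 1 = 1) with hLV
  have haddself : ∀ z : ZMod 2, z + z = 0 := by decide
  -- satisfaction of allowed edges
  have hsat : ∀ e, Allowed E e → ¬ Violates LU LV e := by
    intro e hA hviol
    have hps := pot_step C e (by rw [hCE]; exact hA)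
    rw [hCρ, hCcm] at hps
    have hwt : wt ρ cm e = (if e.2.2 then (1:ZMod 2) else 0)
        + (if cm (ρ e.2.1) then (1:ZMod 2) else 0) := rfl
    have hLVe : LV e.2.1 = decide (pot C e.1 + (if e.2.2 then (1:ZMod 2) else 0) + 1 = 1) := by
      simp only [hLV]
      congr 1
      rw [hps, hwt]
      · refine propext ⟨fun h => ?_, fun h => ?_⟩
        · linear_combination h - haddself (if cm (ρ e.2.1) then (1:ZMod 2) else 0)
        · linear_combination h + haddself (if cm (ρ e.2.1) then (1:ZMod 2) else 0)
    rcases hviol with ⟨hc, heq⟩ | ⟨hc, hne⟩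
    · rw [hLVe, hc] at heq
      rw [hLU] at heq
      simp only [] at heq
      revert heq
      generalize pot C e.1 = z
      revert z; decide
    · rw [hLVe, hc] at hne
      rw [hLU] at hne
      simp only [] at hne
      apply hne
      generalize pot C e.1 = z
      revert z; decide
  -- parity of the labeling
  have hparity : ((Finset.univ.filter (fun u => LU u = true)).card +
      (Finset.univ.filter (fun v => LV v = true)).card) % 2 = n % 2 := by
    have hcast : (((Finset.univ.filter (fun u => LU u = true)).card +
        (Finset.univ.filter (fun v => LV v = true)).card : ℕ) : ZMod 2) = (n : ZMod 2) := by
      push_cast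
      rw [← Finset.sum_boole, ← Finset.sum_boole]
      have hz : ∀ z : ZMod 2, (if z = 1 then (1:ZMod 2) else 0) = z := by decide
      have h1 : ∑ u : Fin n, (if LU u = true then (1:ZMod 2) else 0) = ∑ u : Fin n, pot C u := by
        apply Finset.sum_congr rfl
        intro u _
        rw [hLU]
        simp only [decide_eq_true_eq]
        exact hz _
      have h2 : ∑ v : Fin n, (if LV v = true then (1:ZMod 2) else 0)
          = ∑ v : Fin n, (pot C (ρ v) + (if cm (ρ v) then (1:ZMod 2) else 0) + 1) := by
        apply Finset.sum_congr rfl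
        intro v _
        rw [hLV]
        simp only [decide_eq_true_eq]
        exact hz _
      rw [h1, h2]
      have h3 : ∑ v : Fin n, (pot C (ρ v) + (if cm (ρ v) then (1:ZMod 2) else 0) + 1)
          = ∑ u : Fin n, (pot C u + (if cm u then (1:ZMod 2) else 0) + 1) :=
        hρbij.sum_comp (fun u => pot C u + (if cm u then (1:ZMod 2) else 0) + 1)
      rw [h3]
      have h4 : ∑ u : Fin n, ((pot C u + if cm u = true then (1:ZMod 2) else 0) + 1)
          = (∑ u : Fin n, pot C u) + (∑ u : Fin n, (if cm u = true then (1:ZMod 2) else 0))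
            + (∑ _u : Fin n, (1:ZMod 2)) := by
        rw [Finset.sum_add_distrib, Finset.sum_add_distrib]
      rw [h4, hcm0]
      have h5 : ∑ _u : Fin n, (1:ZMod 2) = (n : ZMod 2) := by
        rw [Finset.sum_const, Finset.card_univ, Fintype.card_fin, nsmul_eq_mul, mul_one]
      rw [h5]
      linear_combination haddself (∑ u : Fin n, pot C u)
    have := (ZMod.natCast_eq_natCast_iff _ _ 2).1 hcast
    exact this
  -- the contradiction
  have hviol0 : ∑ e ∈ E.filter (fun e => Violates LU LV e), x e = 0 := by
    apply Finset.sum_eq_zero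
    intro e he
    rw [Finset.mem_filter] at he
    by_contra hxe
    exact hsat e (allowed_of_support x hx0 hrow hcol he.1 hxe) he.2
  have := hlab LU LV hparity
  rw [hviol0] at this
  linarith
end

section
/- Let G = (U, V, E) be a bipartite graph with |U| = |V| = n, edges colored red or blue, having at least one perfect matching but no perfect matching with an odd number of red edges. Then there exists a labeling L : U ∪ V → {0,1} with |L⁻¹(1)| ≡ n (mod 2) such that every edge lying in some perfect matching of G is consistent with L (red edges have equally-labeled endpoints and blue edges have differently-labeled endpoints). -/
namespace Stmt14Aux

variable {n : ℕ}

/-! ### Basic perfect matching lemmas -/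

lemma pm_left_unique {E M : Finset (ColEdge n)} (hM : IsPM E M) :
    ∀ e ∈ M, ∀ e' ∈ M, e.1 = e'.1 → e = e' := by
  intro e he e' he' h
  have hc : (M.filter (fun x => x.1 = e.1)).card ≤ 1 := le_of_eq (hM.2.1 e.1)
  exact Finset.card_le_one.1 hc e (by simp [Finset.mem_filter, he])
    e' (by simp [Finset.mem_filter, he', h.symm])

lemma pm_right_unique {E M : Finset (ColEdge n)} (hM : IsPM E M) :
    ∀ e ∈ M, ∀ e' ∈ M, e.2.1 = e'.2.1 → e = e' := by
  intro e he e' he' h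
  have hc : (M.filter (fun x => x.2.1 = e.2.1)).card ≤ 1 := le_of_eq (hM.2.2 e.2.1)
  exact Finset.card_le_one.1 hc e (by simp [Finset.mem_filter, he])
    e' (by simp [Finset.mem_filter, he', h.symm])

lemma exists_pmFun {E M : Finset (ColEdge n)} (hM : IsPM E M) : ∃ f : Fin n → ColEdge n,
    (∀ u, f u ∈ M ∧ (f u).1 = u) ∧ ∀ e ∈ M, e = f e.1 := by
  have h : ∀ u : Fin n, ∃ a, M.filter (fun e => e.1 = u) = {a} :=
    fun u => Finset.card_eq_one.1 (hM.2.1 u)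
  choose f hf using h
  refine ⟨f, fun u => ?_, fun e he => ?_⟩
  · have : f u ∈ M.filter (fun e => e.1 = u) := by rw [hf u]; exact Finset.mem_singleton_self _
    simpa using this
  · have : e ∈ M.filter (fun x => x.1 = e.1) := by simp [he]
    rw [hf e.1] at this
    simpa using this

lemma pm_card {E M : Finset (ColEdge n)} (hM : IsPM E M) : M.card = n := by
  have := Finset.card_eq_sum_card_fiberwise (f := fun e : ColEdge n => e.1)
    (s := M) (t := Finset.univ) (fun e _ => Finset.mem_univ _)
  rw [this]
  simp [hM.2.1]

lemma pm_blue {E M : Finset (ColEdge n)}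
    (hnoodd : ¬ ∃ M, IsPM E M ∧ Odd (M.filter (fun e => e.2.2 = true)).card)
    (hM : IsPM E M) : (M.filter (fun e => e.2.2 = false)).card % 2 = n % 2 := by
  push_neg at hnoodd
  have hred : Even (M.filter (fun e => e.2.2 = true)).card :=
    Nat.not_odd_iff_even.1 (hnoodd M hM)
  have hsum : (M.filter (fun e => e.2.2 = true)).card
      + (M.filter (fun e => e.2.2 = false)).card = M.card := by
    have : (M.filter (fun e => e.2.2 = false)) = M.filter (fun e => ¬ e.2.2 = true) := by
      apply Finset.filter_congr; intro e _; simp [Bool.not_eq_true]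
    rw [this]
    exact Finset.card_filter_add_card_filter_not (p := fun e : ColEdge n => e.2.2 = true)
  rw [pm_card hM] at hsum
  obtain ⟨k, hk⟩ := hred
  omega

/-! ### Walks in the contracted digraph -/

inductive Chain (Rel : ColEdge n → Prop) (ν : Fin n → Fin n) :
    Fin n → Fin n → List (ColEdge n) → Prop
  | nil (u) : Chain Rel ν u u []
  | cons {u w : Fin n} {l : List (ColEdge n)} (e : ColEdge n)
      (he : Rel e) (h1 : e.1 = u) (h : Chain Rel ν (ν e.2.1) w l) :
      Chain Rel ν u w (e :: l)

section ChainLemmas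

variable {Rel : ColEdge n → Prop} {ν : Fin n → Fin n}

lemma chain_append {a c b : Fin n} {x y : List (ColEdge n)}
    (hx : Chain Rel ν a c x) (hy : Chain Rel ν c b y) :
    Chain Rel ν a b (x ++ y) := by
  induction hx with
  | nil => exact hy
  | cons e he h1 h ih => exact Chain.cons e he h1 (ih hy)

lemma chain_split {a b : Fin n} {x y : List (ColEdge n)}
    (h : Chain Rel ν a b (x ++ y)) : ∃ c, Chain Rel ν a c x ∧ Chain Rel ν c b y := by
  induction x generalizing a with
  | nil => exact ⟨a, Chain.nil a, h⟩
  | cons e t ih =>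
    cases h with
    | cons _ he h1 h =>
      obtain ⟨c, hc1, hc2⟩ := ih h
      exact ⟨c, Chain.cons e he h1 hc1, hc2⟩

lemma chain_shift {u w : Fin n} {l : List (ColEdge n)} (h : Chain Rel ν u w l) :
    (l.map (fun e => e.1)) ++ [w] = u :: l.map (fun e => ν e.2.1) := by
  induction h with
  | nil => rfl
  | cons e he h1 h ih => simpa [h1] using ih

lemma chain_mem_rel {a b : Fin n} {l : List (ColEdge n)} (h : Chain Rel ν a b l) :
    ∀ e ∈ l, Rel e := by
  induction h with
  | nil => simp
  | cons e he h1 h ih =>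
    intro x hx
    rcases List.mem_cons.1 hx with rfl | hx
    · exact he
    · exact ih x hx

lemma chain_cons_inv {a b : Fin n} {e : ColEdge n} {l : List (ColEdge n)}
    (h : Chain Rel ν a b (e :: l)) :
    Rel e ∧ e.1 = a ∧ Chain Rel ν (ν e.2.1) b l := by
  cases h with
  | cons _ he h1 h => exact ⟨he, h1, h⟩

end ChainLemmas

lemma dup_split {α β : Type*} (f : α → β) :
    ∀ l : List α, ¬(l.map f).Nodup →
      ∃ (l₁ : List α) (e : α) (l₂ : List α) (e' : α) (l₃ : List α),
        l = l₁ ++ e :: l₂ ++ e' :: l₃ ∧ f e = f e' := by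
  intro l
  induction l with
  | nil => simp
  | cons a t ih =>
    intro h
    simp only [List.map_cons, List.nodup_cons] at h
    by_cases ha : f a ∈ t.map f
    · obtain ⟨e', he't, he'⟩ := List.mem_map.1 ha
      obtain ⟨t₁, t₂, rfl⟩ := List.append_of_mem he't
      exact ⟨[], a, t₁, e', t₂, by simp, he'.symm⟩
    · have : ¬(t.map f).Nodup := by tauto
      obtain ⟨l₁, e, l₂, e', l₃, rfl, hfe⟩ := ih this
      exact ⟨a :: l₁, e, l₂, e', l₃, by simp, hfe⟩

lemma countP_xor {α : Type*} (p q : α → Bool) :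
    ∀ l : List α, (l.countP p + l.countP q) % 2 = (l.countP (fun a => p a != q a)) % 2 := by
  intro l
  induction l with
  | nil => rfl
  | cons a t ih =>
    simp only [List.countP_cons]
    cases hp : p a <;> cases hq : q a <;> simp [hp, hq] <;> omega

/-- The list of matching edges along an orbit of `τ`. -/
def orbitList (fM : Fin n → ColEdge n) (τ : Fin n → Fin n) : ℕ → Fin n → List (ColEdge n)
  | 0, _ => []
  | j+1, x => fM x :: orbitList fM τ j (τ x)

lemma orbit_chain {Rel : ColEdge n → Prop} {ν : Fin n → Fin n}
    {fM : Fin n → ColEdge n} {τ : Fin n → Fin n}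
    (hRel : ∀ x, Rel (fM x)) (hfst : ∀ x, (fM x).1 = x)
    (hτ : ∀ x, ν ((fM x).2.1) = τ x) :
    ∀ j x, Chain Rel ν x (τ^[j] x) (orbitList fM τ j x) := by
  intro j
  induction j with
  | zero => intro x; exact Chain.nil x
  | succ j ih =>
    intro x
    refine Chain.cons _ (hRel x) (hfst x) ?_
    rw [hτ x, Function.iterate_succ_apply]
    exact ih (τ x)

/-! ### The context bundling all the fixed data -/

structure Ctx (n : ℕ) where
  E : Finset (ColEdge n)
  M₀ : Finset (ColEdge n)
  hM₀ : IsPM E M₀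
  hnoodd : ¬ ∃ M, IsPM E M ∧ Odd (M.filter (fun e => e.2.2 = true)).card
  f₀ : Fin n → ColEdge n
  hmem : ∀ u, f₀ u ∈ M₀
  hfst : ∀ u, (f₀ u).1 = u
  huniq : ∀ e ∈ M₀, e = f₀ e.1
  σ₀ : Equiv.Perm (Fin n)
  hσ : ∀ u, σ₀ u = (f₀ u).2.1

namespace Ctx

variable (C : Ctx n)

def Rel (e : ColEdge n) : Prop := ∃ M, IsPM C.E M ∧ e ∈ M

def ν (v : Fin n) : Fin n := C.σ₀.symm v

def wt (l : List (ColEdge n)) : ℕ :=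
  l.countP (fun e => e.2.2 != (C.f₀ (C.ν e.2.1)).2.2)

lemma f₀_inj : Function.Injective C.f₀ := by
  intro a b h
  have := C.hfst a
  rw [h, C.hfst b] at this
  exact this.symm

lemma hν1 (v : Fin n) : (C.f₀ (C.ν v)).2.1 = v := by
  rw [← C.hσ]; exact C.σ₀.apply_symm_apply v

lemma hν2 (u : Fin n) : C.ν ((C.f₀ u).2.1) = u := by
  rw [← C.hσ]; exact C.σ₀.symm_apply_apply u

lemma ν_inj : Function.Injective C.ν := C.σ₀.symm.injective

lemma rel_mem_E {e : ColEdge n} (h : C.Rel e) : e ∈ C.E := by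
  obtain ⟨M, hM, heM⟩ := h; exact hM.1 heM

lemma right_uniq₀ {e : ColEdge n} (he : e ∈ C.M₀) : e = C.f₀ (C.ν e.2.1) := by
  apply pm_right_unique C.hM₀ e he _ (C.hmem _)
  rw [C.hν1]

lemma wt_append (x y : List (ColEdge n)) : C.wt (x ++ y) = C.wt x + C.wt y :=
  List.countP_append

/-- The key surgery lemma: a closed chain with pairwise distinct left endpoints
has even weight (because rerouting `M₀` along it produces another perfect
matching, whose blue-count parity agrees with that of `M₀`). -/
lemma cycle_even {u : Fin n} {l : List (ColEdge n)}
    (hc : Chain C.Rel C.ν u u l) (hnd : (l.map (fun e => e.1)).Nodup) :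
    C.wt l % 2 = 0 := by
  classical
  -- permutation between left endpoints and shifted right endpoints
  have hshift := chain_shift hc
  have hperm : (l.map (fun e => e.1)).Perm (l.map (fun e => C.ν e.2.1)) := by
    have h1 : (l.map (fun e => e.1) ++ [u]).Perm (u :: l.map (fun e => e.1)) :=
      List.perm_append_singleton _ _
    rw [hshift] at h1
    exact (h1.symm).cons_inv
  have hndl : l.Nodup := hnd.of_map
  have hndν : (l.map (fun e => C.ν e.2.1)).Nodup := (hperm.nodup_iff).1 hnd
  have hmapν : l.map (fun e => C.ν e.2.1) = (l.map (fun e => e.2.1)).map C.ν := by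
    simp [List.map_map, Function.comp]
  have hndr : (l.map (fun e => e.2.1)).Nodup := by
    rw [hmapν] at hndν; exact hndν.of_map
  have hinjl := List.inj_on_of_nodup_map hnd
  have hinjr := List.inj_on_of_nodup_map hndr
  -- membership transfer between lefts and (ν of) rights
  have hlr : ∀ v' : Fin n, (∃ e ∈ l, e.2.1 = v') ↔ ∃ e ∈ l, e.1 = C.ν v' := by
    intro v'
    constructor
    · rintro ⟨e, hel, rfl⟩
      have : C.ν e.2.1 ∈ l.map (fun e => C.ν e.2.1) := List.mem_map.2 ⟨e, hel, rfl⟩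
      rw [← hperm.mem_iff] at this
      obtain ⟨e', he'l, he'⟩ := List.mem_map.1 this
      exact ⟨e', he'l, he'⟩
    · rintro ⟨e, hel, he⟩
      have : C.ν v' ∈ l.map (fun e => C.ν e.2.1) := by
        rw [← hperm.mem_iff]
        exact List.mem_map.2 ⟨e, hel, he⟩
      obtain ⟨e', he'l, he'⟩ := List.mem_map.1 this
      exact ⟨e', he'l, C.ν_inj he'⟩
  set g : ColEdge n → ColEdge n := fun e => C.f₀ e.1 with hgdef
  set R : Finset (ColEdge n) := (l.map g).toFinset with hRdef
  set A : Finset (ColEdge n) := l.toFinset with hAdef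
  set M' : Finset (ColEdge n) := (C.M₀ \ R) ∪ A with hM'def
  have hmemM' : ∀ x : ColEdge n, x ∈ M' ↔ (x ∈ C.M₀ ∧ x ∉ R) ∨ x ∈ l := by
    intro x
    simp [hM'def, hAdef, Finset.mem_union, Finset.mem_sdiff, List.mem_toFinset]
  have hmemR : ∀ x : ColEdge n, x ∈ R ↔ ∃ e ∈ l, g e = x := by
    intro x; simp [hRdef, List.mem_toFinset, List.mem_map]
  have hRM₀ : R ⊆ C.M₀ := by
    intro x hx
    obtain ⟨e, _, rfl⟩ := (hmemR x).1 hx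
    exact C.hmem _
  have hndg : (l.map g).Nodup := by
    have : l.map g = (l.map (fun e => e.1)).map C.f₀ := by
      simp [hgdef, List.map_map, Function.comp]
    rw [this]
    exact hnd.map (C.f₀_inj)
  -- M' is a perfect matching
  have hPM : IsPM C.E M' := by
    refine ⟨?_, ?_, ?_⟩
    · intro x hx
      rcases (hmemM' x).1 hx with ⟨hx₀, _⟩ | hxl
      · exact C.hM₀.1 hx₀
      · exact C.rel_mem_E (chain_mem_rel hc x hxl)
    · intro u'
      by_cases hu' : ∃ e ∈ l, e.1 = u'
      · obtain ⟨es, hesl, hes1⟩ := hu'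
        have : M'.filter (fun x => x.1 = u') = {es} := by
          ext x
          simp only [Finset.mem_filter, Finset.mem_singleton]
          constructor
          · rintro ⟨hxM', hx1⟩
            rcases (hmemM' x).1 hxM' with ⟨hx₀, hxR⟩ | hxl
            · exfalso
              apply hxR
              refine (hmemR x).2 ⟨es, hesl, ?_⟩
              rw [hgdef]
              simp only
              rw [hes1, ← hx1]
              exact (C.huniq x hx₀).symm
            · exact hinjl hxl hesl (by rw [hx1, hes1])
          · rintro rfl
            exact ⟨(hmemM' _).2 (Or.inr hesl), hes1⟩
        rw [this, Finset.card_singleton]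
      · have : M'.filter (fun x => x.1 = u') = {C.f₀ u'} := by
          ext x
          simp only [Finset.mem_filter, Finset.mem_singleton]
          constructor
          · rintro ⟨hxM', hx1⟩
            rcases (hmemM' x).1 hxM' with ⟨hx₀, _⟩ | hxl
            · rw [C.huniq x hx₀, hx1]
            · exact absurd ⟨x, hxl, hx1⟩ hu'
          · rintro rfl
            refine ⟨(hmemM' _).2 (Or.inl ⟨C.hmem u', ?_⟩), C.hfst u'⟩
            intro hR
            obtain ⟨e, hel, hge⟩ := (hmemR _).1 hR
            exact hu' ⟨e, hel, C.f₀_inj hge⟩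
        rw [this, Finset.card_singleton]
    · intro v'
      by_cases hv' : ∃ e ∈ l, e.2.1 = v'
      · obtain ⟨es, hesl, hes1⟩ := hv'
        have : M'.filter (fun x => x.2.1 = v') = {es} := by
          ext x
          simp only [Finset.mem_filter, Finset.mem_singleton]
          constructor
          · rintro ⟨hxM', hx1⟩
            rcases (hmemM' x).1 hxM' with ⟨hx₀, hxR⟩ | hxl
            · exfalso
              apply hxR
              obtain ⟨e', he'l, he'1⟩ := (hlr v').1 ⟨es, hesl, hes1⟩
              refine (hmemR x).2 ⟨e', he'l, ?_⟩
              rw [hgdef]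
              simp only
              rw [he'1]
              rw [C.right_uniq₀ hx₀, hx1]
            · exact hinjr hxl hesl (by rw [hx1, hes1])
          · rintro rfl
            exact ⟨(hmemM' _).2 (Or.inr hesl), hes1⟩
        rw [this, Finset.card_singleton]
      · have : M'.filter (fun x => x.2.1 = v') = {C.f₀ (C.ν v')} := by
          ext x
          simp only [Finset.mem_filter, Finset.mem_singleton]
          constructor
          · rintro ⟨hxM', hx1⟩
            rcases (hmemM' x).1 hxM' with ⟨hx₀, _⟩ | hxl
            · rw [C.right_uniq₀ hx₀, hx1]
            · exact absurd ⟨x, hxl, hx1⟩ hv'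
          · rintro rfl
            refine ⟨(hmemM' _).2 (Or.inl ⟨C.hmem _, ?_⟩), C.hν1 v'⟩
            intro hR
            obtain ⟨e, hel, hge⟩ := (hmemR _).1 hR
            have : C.ν v' = e.1 := (C.f₀_inj hge).symm
            exact hv' ((hlr v').2 ⟨e, hel, this.symm⟩)
        rw [this, Finset.card_singleton]
  -- blue counting
  have hdisj : Disjoint (C.M₀ \ R) A := by
    rw [Finset.disjoint_right]
    intro x hxA hxS
    rw [Finset.mem_sdiff] at hxS
    apply hxS.2
    refine (hmemR x).2 ⟨x, List.mem_toFinset.1 hxA, ?_⟩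
    rw [hgdef]
    exact (C.huniq x hxS.1).symm
  have hcardM' : (M'.filter (fun e => e.2.2 = false)).card
      = ((C.M₀ \ R).filter (fun e => e.2.2 = false)).card
        + (A.filter (fun e => e.2.2 = false)).card := by
    rw [hM'def, Finset.filter_union]
    exact Finset.card_union_of_disjoint (Finset.disjoint_filter_filter hdisj)
  have hsdiff : ((C.M₀ \ R).filter (fun e => e.2.2 = false))
      = (C.M₀.filter (fun e => e.2.2 = false)) \ (R.filter (fun e => e.2.2 = false)) := by
    ext x
    simp only [Finset.mem_filter, Finset.mem_sdiff]
    tauto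
  have hRle : (R.filter (fun e => e.2.2 = false)).card
      ≤ (C.M₀.filter (fun e => e.2.2 = false)).card :=
    Finset.card_le_card (Finset.filter_subset_filter _ hRM₀)
  have hcards : ((C.M₀ \ R).filter (fun e => e.2.2 = false)).card
      = (C.M₀.filter (fun e => e.2.2 = false)).card
        - (R.filter (fun e => e.2.2 = false)).card := by
    rw [hsdiff]
    exact Finset.card_sdiff_of_subset (Finset.filter_subset_filter _ hRM₀)
  -- list versions of the two cards
  have hcardA : (A.filter (fun e => e.2.2 = false)).card = l.countP (fun e => !e.2.2) := by
    have h1 : A.filter (fun e => e.2.2 = false) = (l.filter (fun e => !e.2.2)).toFinset := by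
      rw [hAdef, List.toFinset_filter]
      apply Finset.filter_congr
      intro x _
      simp [Bool.not_eq_true']
    rw [h1, List.toFinset_card_of_nodup (hndl.filter _), ← List.countP_eq_length_filter]
  have hcardR : (R.filter (fun e => e.2.2 = false)).card
      = l.countP (fun e => !(g e).2.2) := by
    have h1 : R.filter (fun e => e.2.2 = false) = ((l.map g).filter (fun e => !e.2.2)).toFinset := by
      rw [hRdef, List.toFinset_filter]
      apply Finset.filter_congr
      intro x _
      simp [Bool.not_eq_true']
    rw [h1, List.toFinset_card_of_nodup (hndg.filter _), ← List.countP_eq_length_filter,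
      List.countP_map]
    rfl
  have hb' := pm_blue C.hnoodd hPM
  have hb₀ := pm_blue C.hnoodd C.hM₀
  have hkey : (l.countP (fun e => !e.2.2) + l.countP (fun e => !(g e).2.2)) % 2 = 0 := by
    rw [← hcardA, ← hcardR]
    omega
  -- transfer the second count through the permutation
  have htrans : l.countP (fun e => !(g e).2.2)
      = l.countP (fun e => !(C.f₀ (C.ν e.2.1)).2.2) := by
    have h1 : l.countP (fun e => !(g e).2.2)
        = (l.map (fun e => e.1)).countP (fun x => !(C.f₀ x).2.2) := by
      rw [List.countP_map]; rfl
    have h2 : (l.map (fun e => C.ν e.2.1)).countP (fun x => !(C.f₀ x).2.2)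
        = l.countP (fun e => !(C.f₀ (C.ν e.2.1)).2.2) := by
      rw [List.countP_map]; rfl
    rw [h1, hperm.countP_eq, h2]
  rw [htrans] at hkey
  have := countP_xor (fun e : ColEdge n => !e.2.2)
    (fun e => !(C.f₀ (C.ν e.2.1)).2.2) l
  rw [hkey] at this
  have hco : l.countP (fun e => e.2.2 != (C.f₀ (C.ν e.2.1)).2.2)
      = l.countP (fun e => (!e.2.2) != !(C.f₀ (C.ν e.2.1)).2.2) := by
    apply List.countP_congr
    intro e _
    cases h1 : e.2.2 <;> cases h2 : (C.f₀ (C.ν e.2.1)).2.2 <;> simp [h1, h2]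
  show (l.countP (fun e => e.2.2 != (C.f₀ (C.ν e.2.1)).2.2)) % 2 = 0
  rw [hco]
  omega

end Ctx
end Stmt14Aux

namespace Stmt14Aux
namespace Ctx

variable {n : ℕ} (C : Ctx n)

/-- Every closed chain has even weight. -/
lemma closed_even {u : Fin n} {l : List (ColEdge n)} (hc : Chain C.Rel C.ν u u l) :
    C.wt l % 2 = 0 := by
  suffices h : ∀ k (l : List (ColEdge n)) (u : Fin n), l.length ≤ k →
      Chain C.Rel C.ν u u l → C.wt l % 2 = 0 from h l.length l u le_rfl hc
  intro k
  induction k with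
  | zero =>
    intro l u hl hc
    have : l = [] := List.eq_nil_of_length_eq_zero (Nat.le_zero.1 hl)
    subst this
    rfl
  | succ k ih =>
    intro l u hl hc
    by_cases hnd : (l.map (fun e => e.1)).Nodup
    · exact C.cycle_even hc hnd
    · obtain ⟨l₁, e, l₂, e', l₃, rfl, hfe⟩ := dup_split _ l hnd
      obtain ⟨c₂, hx12, htail⟩ := chain_split hc
      obtain ⟨c₁, hx1, hmid⟩ := chain_split hx12
      have h1 := (chain_cons_inv hmid).2.1
      have h1' := (chain_cons_inv htail).2.1
      have hc2 : c₂ = c₁ := by rw [← h1', ← hfe]; exact h1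
      have hmidc : Chain C.Rel C.ν c₁ c₁ (e :: l₂) := by rwa [hc2] at hmid
      have htail' : Chain C.Rel C.ν c₁ u (e' :: l₃) := by rwa [hc2] at htail
      have houter : Chain C.Rel C.ν u u (l₁ ++ e' :: l₃) := chain_append hx1 htail' 
      have e1 : C.wt (e :: l₂) % 2 = 0 :=
        ih _ _ (by simp only [List.length_append, List.length_cons] at hl ⊢; omega) hmidc
      have e2 : C.wt (l₁ ++ e' :: l₃) % 2 = 0 :=
        ih _ _ (by simp only [List.length_append, List.length_cons] at hl ⊢; omega) houter
      have hw : C.wt (l₁ ++ e :: l₂ ++ e' :: l₃)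
          = C.wt l₁ + C.wt (e :: l₂) + C.wt (e' :: l₃) := by
        rw [show l₁ ++ e :: l₂ ++ e' :: l₃ = l₁ ++ ((e :: l₂) ++ (e' :: l₃)) by simp]
        rw [C.wt_append, C.wt_append]
        omega
      have hw2 : C.wt (l₁ ++ e' :: l₃) = C.wt l₁ + C.wt (e' :: l₃) := C.wt_append _ _
      omega

/-- Reverse traversal of a relevant edge-step, with the same parity. -/
lemma rev_step {e : ColEdge n} (he : C.Rel e) :
    ∃ l, Chain C.Rel C.ν (C.ν e.2.1) e.1 l ∧ (C.wt l + C.wt [e]) % 2 = 0 := by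
  obtain ⟨M, hM, heM⟩ := he
  obtain ⟨fM, hfM1, hfM2⟩ := exists_pmFun hM
  have hinj : Function.Injective (fun x => (fM x).2.1) := by
    intro a b hab
    have : fM a = fM b := pm_right_unique hM _ ((hfM1 a).1) _ ((hfM1 b).1) hab
    rw [← (hfM1 a).2, this, (hfM1 b).2]
  set τ : Equiv.Perm (Fin n) :=
    (Equiv.ofBijective _ (Finite.injective_iff_bijective.1 hinj)).trans C.σ₀.symm with hτdef
  have hτ : ∀ x, C.ν ((fM x).2.1) = τ x := fun x => rfl
  have hRel : ∀ x, C.Rel (fM x) := fun x => ⟨M, hM, (hfM1 x).1⟩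
  have hfst : ∀ x, (fM x).1 = x := fun x => (hfM1 x).2
  have horb := orbit_chain hRel hfst hτ
  set k := orderOf τ with hkdef
  have hk : 0 < k := orderOf_pos τ
  obtain ⟨k', hk'⟩ : ∃ k', k = k' + 1 := ⟨k - 1, (Nat.succ_pred_eq_of_pos hk).symm⟩
  have hiter : ∀ x, τ^[k] x = x := by
    intro x
    rw [Equiv.Perm.iterate_eq_pow, hkdef, pow_orderOf_eq_one]
    rfl
  have hfe : fM e.1 = e := (hfM2 e heM).symm
  -- the full closed orbit chain at e.1
  have hfull : Chain C.Rel C.ν e.1 e.1 (orbitList fM τ k e.1) := by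
    have := horb k e.1
    rwa [hiter] at this
  have hsplit : orbitList fM τ k e.1 = e :: orbitList fM τ k' (τ e.1) := by
    rw [hk']
    show fM e.1 :: _ = _
    rw [hfe]
  have hrest : Chain C.Rel C.ν (C.ν e.2.1) e.1 (orbitList fM τ k' (τ e.1)) := by
    have h2 := horb k' (τ e.1)
    have h3 : (⇑τ)^[k'] (τ e.1) = e.1 := by
      rw [← Function.iterate_succ_apply, Nat.succ_eq_add_one, ← hk']
      exact hiter e.1
    rw [h3] at h2
    have h4 : τ e.1 = C.ν e.2.1 := by rw [← hτ, hfe]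
    rw [← h4]
    exact h2
  refine ⟨_, hrest, ?_⟩
  have hcl := C.closed_even hfull
  rw [hsplit] at hcl
  have : C.wt (e :: orbitList fM τ k' (τ e.1))
      = C.wt [e] + C.wt (orbitList fM τ k' (τ e.1)) := C.wt_append [e] _
  omega

/-- Parity-tagged reachability in the contracted digraph. -/
def Reach (u w : Fin n) (p : Bool) : Prop :=
  ∃ l, Chain C.Rel C.ν u w l ∧ C.wt l % 2 = cond p 1 0

lemma reach_refl (u : Fin n) : C.Reach u u false := ⟨[], Chain.nil u, rfl⟩

lemma reach_trans {u v w : Fin n} {p q : Bool}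
    (h1 : C.Reach u v p) (h2 : C.Reach v w q) : C.Reach u w (xor p q) := by
  obtain ⟨l1, hc1, hp1⟩ := h1
  obtain ⟨l2, hc2, hp2⟩ := h2
  refine ⟨l1 ++ l2, chain_append hc1 hc2, ?_⟩
  rw [C.wt_append]
  cases p <;> cases q <;> simp only [Bool.xor_false, Bool.xor_true, Bool.not_true,
    Bool.not_false, cond_true, cond_false] at hp1 hp2 ⊢ <;> omega

/-- The parity of a single edge-step. -/
def epar (e : ColEdge n) : Bool := e.2.2 != (C.f₀ (C.ν e.2.1)).2.2

lemma wt_single (e : ColEdge n) : C.wt [e] = cond (C.epar e) 1 0 := by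
  unfold wt epar
  rw [List.countP_cons, List.countP_nil]
  cases h : (e.2.2 != (C.f₀ (C.ν e.2.1)).2.2) <;> simp [h]

lemma reach_arc {e : ColEdge n} (he : C.Rel e) : C.Reach e.1 (C.ν e.2.1) (C.epar e) :=
  ⟨[e], Chain.cons e he rfl (Chain.nil _), by rw [C.wt_single]; cases C.epar e <;> rfl⟩

lemma reach_arc_rev {e : ColEdge n} (he : C.Rel e) : C.Reach (C.ν e.2.1) e.1 (C.epar e) := by
  obtain ⟨l, hc, hp⟩ := C.rev_step he
  refine ⟨l, hc, ?_⟩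
  rw [C.wt_single] at hp
  cases h : C.epar e <;> rw [h] at hp <;>
    simp only [cond_true, cond_false] at hp ⊢ <;> omega

lemma reach_symm {u w : Fin n} {p : Bool} (h : C.Reach u w p) : C.Reach w u p := by
  obtain ⟨l, hc, hp⟩ := h
  induction l generalizing u p with
  | nil =>
    cases hc
    have h0 : C.wt ([] : List (ColEdge n)) % 2 = 0 := rfl
    cases p with
    | false => exact C.reach_refl _
    | true =>
      simp only [cond_true] at hp
      rw [h0] at hp
      exact absurd hp (by decide)
  | cons e t ih =>
    obtain ⟨he, h1, ht⟩ := chain_cons_inv hc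
    set pt : Bool := decide (C.wt t % 2 = 1) with hptdef
    have hpt : C.wt t % 2 = cond pt 1 0 := by
      rcases Nat.mod_two_eq_zero_or_one (C.wt t) with h | h <;> simp [hptdef, h]
    have hrt : C.Reach w (C.ν e.2.1) pt := ih ht hpt
    have harc : C.Reach (C.ν e.2.1) e.1 (C.epar e) := C.reach_arc_rev he
    have := C.reach_trans hrt harc
    rw [h1] at this
    have hp' : xor pt (C.epar e) = p := by
      have hwc : C.wt (e :: t) = C.wt [e] + C.wt t := C.wt_append [e] t
      have hws := C.wt_single e
      cases hpe : C.epar e <;> rw [hpe] at hws <;>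
        cases hp2 : pt <;> rw [hp2] at hpt <;>
        cases hp3 : p <;> rw [hp3] at hp <;>
        simp only [cond_true, cond_false] at hws hpt hp <;>
        first
          | decide
          | (exfalso; omega)
    rwa [hp'] at this

lemma reach_unique {u w : Fin n} {p q : Bool}
    (h1 : C.Reach u w p) (h2 : C.Reach u w q) : p = q := by
  have h3 := C.reach_trans h1 (C.reach_symm h2)
  obtain ⟨l, hc, hp⟩ := h3
  have h0 := C.closed_even hc
  cases p <;> cases q <;> first
    | rfl
    | (exfalso; simp only [Bool.xor_false, Bool.xor_true, Bool.not_true, Bool.not_false,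
        cond_true, cond_false] at hp; omega)

end Ctx
end Stmt14Aux

namespace Stmt14Aux

lemma card_filter_xor {α : Type*} [Fintype α] (p q : α → Bool) :
    ((Finset.univ.filter (fun a => p a = true)).card
      + (Finset.univ.filter (fun a => xor (p a) (q a) = true)).card) % 2
      = (Finset.univ.filter (fun a => q a = true)).card % 2 := by
  classical
  rw [← ZMod.natCast_eq_natCast_iff' _ _ 2]
  simp only [Finset.card_filter]
  push_cast
  rw [← Finset.sum_add_distrib]
  apply Finset.sum_congr rfl
  intro a _
  cases hp : p a <;> cases hq : q a <;> (simp [hp, hq]; try decide)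

namespace Ctx

variable {n : ℕ} (C : Ctx n)

open Finset

open scoped Classical in
noncomputable def comp (u : Fin n) : Finset (Fin n) :=
  Finset.univ.filter (fun x => ∃ p, C.Reach u x p)

lemma mem_comp {u x : Fin n} : x ∈ C.comp u ↔ ∃ p, C.Reach u x p := by
  classical
  simp [comp]

lemma self_mem_comp (u : Fin n) : u ∈ C.comp u :=
  (C.mem_comp).2 ⟨false, C.reach_refl u⟩

noncomputable def root (u : Fin n) : Fin n :=
  (C.comp u).min' ⟨u, C.self_mem_comp u⟩

lemma root_reach (u : Fin n) : ∃ p, C.Reach u (C.root u) p :=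
  (C.mem_comp).1 ((C.comp u).min'_mem _)

lemma comp_congr {u w : Fin n} (h : ∃ p, C.Reach u w p) : C.comp u = C.comp w := by
  obtain ⟨q, hq⟩ := h
  ext x
  rw [C.mem_comp, C.mem_comp]
  constructor
  · rintro ⟨r, hr⟩
    exact ⟨_, C.reach_trans (C.reach_symm hq) hr⟩
  · rintro ⟨r, hr⟩
    exact ⟨_, C.reach_trans hq hr⟩

lemma root_congr {u w : Fin n} (h : ∃ p, C.Reach u w p) : C.root u = C.root w := by
  unfold root
  congr 1
  exact C.comp_congr h

open scoped Classical in
noncomputable def lab (u : Fin n) : Bool :=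
  if C.Reach (C.root u) u true then true else false

lemma lab_spec (u : Fin n) : C.Reach (C.root u) u (C.lab u) := by
  classical
  unfold lab
  split_ifs with h
  · exact h
  · obtain ⟨p, hp⟩ := C.root_reach u
    have hp' := C.reach_symm hp
    cases p with
    | true => exact absurd hp' h
    | false => exact hp'

noncomputable def labV (v : Fin n) : Bool :=
  xor (C.lab (C.ν v)) (!(C.f₀ (C.ν v)).2.2)

lemma consistent {e : ColEdge n} (he : C.Rel e) :
    (e.2.2 = true ∧ C.lab e.1 = C.labV e.2.1) ∨
    (e.2.2 = false ∧ C.lab e.1 ≠ C.labV e.2.1) := by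
  have harc := C.reach_arc he
  have hroot : C.root e.1 = C.root (C.ν e.2.1) := C.root_congr ⟨_, harc⟩
  have h1 := C.lab_spec e.1
  have h2 := C.lab_spec (C.ν e.2.1)
  rw [← hroot] at h2
  have h3 := C.reach_trans h1 harc
  have h4 : C.lab (C.ν e.2.1) = xor (C.lab e.1) (C.epar e) := C.reach_unique h2 h3
  rw [labV, h4, epar]
  cases hc : e.2.2 <;> cases hf : (C.f₀ (C.ν e.2.1)).2.2 <;> cases hl : C.lab e.1 <;>
    simp [hc, hf, hl]

lemma label_parity :
    ((Finset.univ.filter (fun u => C.lab u = true)).card +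
      (Finset.univ.filter (fun v => C.labV v = true)).card) % 2 = n % 2 := by
  classical
  have h1 : (Finset.univ.filter (fun v => C.labV v = true)).card
      = (Finset.univ.filter (fun w => xor (C.lab w) (!(C.f₀ w).2.2) = true)).card := by
    apply Finset.card_bij' (i := fun v _ => C.ν v) (j := fun w _ => (C.f₀ w).2.1)
    · intro v hv
      simp only [Finset.mem_filter, Finset.mem_univ, true_and] at hv ⊢
      rw [← hv]
      rfl
    · intro w hw
      simp only [Finset.mem_filter, Finset.mem_univ, true_and] at hw ⊢
      rw [labV, C.hν2]
      exact hw
    · intro v _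
      exact C.hν1 v
    · intro w _
      exact C.hν2 w
  have h2 := card_filter_xor (fun u => C.lab u) (fun w => !(C.f₀ w).2.2)
  have h3 : (Finset.univ.filter (fun w => (!(C.f₀ w).2.2) = true)).card
      = (C.M₀.filter (fun e => e.2.2 = false)).card := by
    apply Finset.card_bij (i := fun w _ => C.f₀ w)
    · intro w hw
      simp only [Finset.mem_filter, Finset.mem_univ, true_and] at hw ⊢
      exact ⟨C.hmem w, by simpa using hw⟩
    · intro a _ b _ hab
      exact C.f₀_inj hab
    · intro e hee
      simp only [Finset.mem_filter] at hee
      refine ⟨e.1, ?_, (C.huniq e hee.1).symm⟩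
      simp only [Finset.mem_filter, Finset.mem_univ, true_and]
      rw [← C.huniq e hee.1, hee.2]
      rfl
  rw [h1, h2, h3]
  exact pm_blue C.hnoodd C.hM₀

end Ctx
end Stmt14Aux

/-- If the colored bipartite graph has a perfect matching but no perfect
matching with an odd number of red edges, then there is a labeling `(LU, LV)`
with `|L⁻¹(1)| ≡ n (mod 2)` such that every edge lying in some perfect matching
is consistent with it: red edges join equally labeled vertices and blue edges
join differently labeled vertices. -/
theorem stmt14 {n : ℕ} (E : Finset (ColEdge n))
    (hpm : ∃ M, IsPM E M)
    (hnoodd : ¬ ∃ M, IsPM E M ∧ Odd (M.filter (fun e => e.2.2 = true)).card) :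
    ∃ LU LV : Fin n → Bool,
      ((Finset.univ.filter (fun u => LU u = true)).card +
        (Finset.univ.filter (fun v => LV v = true)).card) % 2 = n % 2 ∧
      ∀ e ∈ E, (∃ M, IsPM E M ∧ e ∈ M) →
        ((e.2.2 = true ∧ LU e.1 = LV e.2.1) ∨
         (e.2.2 = false ∧ LU e.1 ≠ LV e.2.1)) := by
  classical
  obtain ⟨M₀, hM₀⟩ := hpm
  obtain ⟨f₀, hf₀1, hf₀2⟩ := Stmt14Aux.exists_pmFun hM₀
  have hinj : Function.Injective (fun u => (f₀ u).2.1) := by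
    intro a b hab
    have : f₀ a = f₀ b := Stmt14Aux.pm_right_unique hM₀ _ (hf₀1 a).1 _ (hf₀1 b).1 hab
    rw [← (hf₀1 a).2, this, (hf₀1 b).2]
  let σ₀ : Equiv.Perm (Fin n) := Equiv.ofBijective _ (Finite.injective_iff_bijective.1 hinj)
  let C : Stmt14Aux.Ctx n :=
    ⟨E, M₀, hM₀, hnoodd, f₀, fun u => (hf₀1 u).1, fun u => (hf₀1 u).2, hf₀2, σ₀, fun u => rfl⟩
  refine ⟨C.lab, C.labV, C.label_parity, ?_⟩
  intro e _ hrel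
  exact C.consistent hrel
end
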